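/- Let H_0,...,H_{m-1} be real n×n matrices with spectral norms ‖H_k‖₂ ≤ ρ₀ ρ^k for ρ₀ ≥ 1, 0 < ρ < 1, and define F(θ) = Σ_{k=0}^{m-1} (H_k e^{-ikθ} + H_k^T e^{ikθ}). Let M ≥ 2 be an integer and ε ≥ ((m-1)/M) π ρ₀ (1-ρ^m)/(1-ρ). If F(qπ/M) ⪰ ε I for all q in {0,...,M} (in the positive semidefinite ordering on Hermitian matrices), then F(θ) ⪰ 0 for all θ in [0,π]. -/

import Mathlib

set_option synthInstance.maxHeartbeats 1000000
set_option maxHeartbeats 1000000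

open Matrix
open scoped ComplexOrder

/-- F(θ) = Σ_{k=0}^{m-1} (H_k e^{-ikθ} + H_k^T e^{ikθ}). -/
noncomputable def Ffun {n m : ℕ} (H : Fin m → Matrix (Fin n) (Fin n) ℝ) (θ : ℝ) :
    Matrix (Fin n) (Fin n) ℂ :=
  ∑ k : Fin m,
    (Complex.exp (-((k : ℕ) : ℂ) * (θ : ℂ) * Complex.I) • (H k).map (Complex.ofReal)
      + Complex.exp (((k : ℕ) : ℂ) * (θ : ℂ) * Complex.I) • ((H k)ᵀ).map (Complex.ofReal))

noncomputable def specNorm {n : ℕ} (A : Matrix (Fin n) (Fin n) ℂ) : ℝ :=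
  ‖Matrix.toEuclideanCLM (𝕜 := ℂ) A‖

lemma exp_I_sub_one_le (t : ℝ) : ‖Complex.exp (t * Complex.I) - 1‖ ≤ |t| := by
  have h : ‖Complex.exp (t * Complex.I) - 1‖^2 = 2 - 2 * Real.cos t := by
    rw [Complex.exp_mul_I]
    simp only [Complex.sq_norm, Complex.normSq_apply, Complex.add_re,
      Complex.add_im, Complex.sub_re, Complex.sub_im, Complex.one_re, Complex.one_im,
      Complex.mul_re, Complex.mul_im, Complex.I_re, Complex.I_im,
      Complex.cos_ofReal_re, Complex.cos_ofReal_im, Complex.sin_ofReal_re, Complex.sin_ofReal_im]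
    nlinarith [Real.sin_sq_add_cos_sq t]
  nlinarith [Real.one_sub_sq_div_two_le_cos (x := t),
    norm_nonneg (Complex.exp (t * Complex.I) - 1), abs_nonneg t, sq_abs t]

lemma exp_I_sub_exp_I (a b : ℝ) :
    ‖Complex.exp (a * Complex.I) - Complex.exp (b * Complex.I)‖ ≤ |a - b| := by
  have h : Complex.exp (a * Complex.I) - Complex.exp (b * Complex.I)
      = Complex.exp (b * Complex.I) * (Complex.exp ((a - b : ℝ) * Complex.I) - 1) := by
    rw [mul_sub, ← Complex.exp_add, mul_one]
    push_cast
    ring_nf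
  rw [h, norm_mul]
  have h1 : ‖Complex.exp ((b:ℂ) * Complex.I)‖ = 1 := Complex.norm_exp_ofReal_mul_I b
  rw [h1, one_mul]
  exact exp_I_sub_one_le _

lemma map_conjT {n : ℕ} (A : Matrix (Fin n) (Fin n) ℝ) :
    ((A.map Complex.ofReal))ᴴ = (Aᵀ).map Complex.ofReal := by
  ext i j
  simp [conjTranspose_apply]

lemma Ffun_herm {n m : ℕ} (H : Fin m → Matrix (Fin n) (Fin n) ℝ) (θ : ℝ) :
    (Ffun H θ).IsHermitian := by
  unfold Ffun Matrix.IsHermitian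
  rw [conjTranspose_sum]
  refine Finset.sum_congr rfl fun k _ => ?_
  rw [conjTranspose_add, conjTranspose_smul, conjTranspose_smul, map_conjT, map_conjT,
    transpose_transpose]
  rw [show (star (Complex.exp (-((k:ℕ):ℂ) * (θ:ℂ) * Complex.I))) = (starRingEnd ℂ) (Complex.exp (-((k:ℕ):ℂ) * (θ:ℂ) * Complex.I)) from rfl,
    show (star (Complex.exp (((k:ℕ):ℂ) * (θ:ℂ) * Complex.I))) = (starRingEnd ℂ) (Complex.exp (((k:ℕ):ℂ) * (θ:ℂ) * Complex.I)) from rfl,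
    ← Complex.exp_conj, ← Complex.exp_conj]
  simp only [_root_.map_mul, _root_.map_neg, Complex.conj_I, Complex.conj_ofReal, map_natCast]
  ring_nf
  rw [add_comm]

lemma psd_of_norm_le {n : ℕ} {D : Matrix (Fin n) (Fin n) ℂ} {ε : ℝ}
    (hD : D.IsHermitian) (hle : specNorm D ≤ ε) :
    ((ε : ℂ) • (1 : Matrix (Fin n) (Fin n) ℂ) - D).PosSemidef := by
  set Φ := Matrix.toEuclideanCLM (𝕜 := ℂ) (n := Fin n) with hΦ
  have hherm : ((ε : ℂ) • (1 : Matrix (Fin n) (Fin n) ℂ) - D).IsHermitian := by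
    unfold Matrix.IsHermitian
    rw [conjTranspose_sub, conjTranspose_smul, conjTranspose_one, hD.eq]
    simp [Complex.conj_ofReal]
  refine posSemidef_iff_dotProduct_mulVec.2 ⟨hherm, fun x => ?_⟩
  set y : EuclideanSpace ℂ (Fin n) := (WithLp.equiv 2 _).symm x with hy
  set T := Φ D with hT
  have hself : IsSelfAdjoint T :=
    (map_star Φ D).symm.trans (congrArg Φ hD)
  have hinner1 : (inner ℂ y y : ℂ) = star x ⬝ᵥ x := (EuclideanSpace.inner_toLp_toLp x x).trans (dotProduct_comm _ _)
  have hinner2 : (inner ℂ y (T y) : ℂ) = star x ⬝ᵥ (D *ᵥ x) := by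
    rw [hT, hy]
    rw [show Φ D ((WithLp.equiv 2 _).symm x) = (WithLp.equiv 2 _).symm (Matrix.toLin' D x) from
      Matrix.toEuclideanCLM_toLp D x]
    rw [Matrix.toLin'_apply]
    exact (EuclideanSpace.inner_toLp_toLp x (D *ᵥ x)).trans (dotProduct_comm _ _)
  have key : star x ⬝ᵥ (((ε : ℂ) • (1 : Matrix (Fin n) (Fin n) ℂ) - D) *ᵥ x)
      = (ε : ℂ) * (inner ℂ y y : ℂ) - (inner ℂ y (T y) : ℂ) := by
    rw [hinner1, hinner2, sub_mulVec, dotProduct_sub, smul_mulVec, one_mulVec,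
      dotProduct_smul, smul_eq_mul]
  have hconj : (starRingEnd ℂ) (inner ℂ y (T y) : ℂ) = (inner ℂ y (T y) : ℂ) := by
    rw [inner_conj_symm]
    nth_rewrite 1 [← hself.adjoint_eq]
    exact ContinuousLinearMap.adjoint_inner_left T y y
  have him0 : (inner ℂ y (T y) : ℂ).im = 0 := by
    have := congrArg Complex.im hconj
    simp only [Complex.conj_im] at this
    linarith
  have hTn : ‖T‖ ≤ ε := hle
  have hre : (inner ℂ y (T y) : ℂ).re ≤ ε * ‖y‖^2 := by
    calc (inner ℂ y (T y) : ℂ).re ≤ ‖(inner ℂ y (T y) : ℂ)‖ := Complex.re_le_norm _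
    _ ≤ ‖y‖ * ‖T y‖ := norm_inner_le_norm y (T y)
    _ ≤ ‖y‖ * (‖T‖ * ‖y‖) := by gcongr; exact T.le_opNorm y
    _ ≤ ε * ‖y‖^2 := by nlinarith [norm_nonneg y, norm_nonneg (T y), (norm_nonneg T).trans hTn]
  have hyy : (inner ℂ y y : ℂ) = ((‖y‖^2 : ℝ) : ℂ) := by
    rw [inner_self_eq_norm_sq_to_K]; norm_num
  rw [key, hyy]
  have hcast : (ε:ℂ) * ((‖y‖^2:ℝ):ℂ) = ((ε*‖y‖^2 : ℝ):ℂ) := by push_cast; ring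
  rw [hcast]
  generalize hw : (inner ℂ y (T y) : ℂ) = w at him0 hre
  rw [Complex.le_def]
  refine ⟨?_, ?_⟩
  · simp only [Complex.zero_re, Complex.sub_re, Complex.ofReal_re]
    linarith
  · rw [Complex.zero_im, Complex.sub_im, him0, Complex.ofReal_im, sub_zero]

set_option linter.unusedVariables false in
lemma specNorm_transpose {n : ℕ} (A : Matrix (Fin n) (Fin n) ℝ) :
    specNorm ((Aᵀ).map Complex.ofReal) = specNorm (A.map Complex.ofReal) := by
  unfold specNorm
  rw [← map_conjT, show (A.map Complex.ofReal)ᴴ = star (A.map Complex.ofReal) from rfl,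
    map_star, ContinuousLinearMap.star_eq_adjoint]
  exact ContinuousLinearMap.adjoint.norm_map _

lemma Ffun_lip {n m : ℕ} (H : Fin m → Matrix (Fin n) (Fin n) ℝ) {ρ₀ ρ : ℝ}
    (hH : ∀ k : Fin m, specNorm ((H k).map Complex.ofReal) ≤ ρ₀ * ρ ^ (k : ℕ))
    (θ₁ θ₂ : ℝ) :
    specNorm (Ffun H θ₁ - Ffun H θ₂)
      ≤ ∑ k : Fin m, 2 * (k : ℝ) * |θ₁ - θ₂| * (ρ₀ * ρ ^ (k : ℕ)) := by
  set Φ := Matrix.toEuclideanCLM (𝕜 := ℂ) (n := Fin n) with hΦ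
  unfold Ffun
  rw [← Finset.sum_sub_distrib]
  unfold specNorm
  rw [map_sum]
  refine (norm_sum_le _ _).trans (Finset.sum_le_sum fun k _ => ?_)
  have hterm : (Complex.exp (-((k : ℕ) : ℂ) * (θ₁ : ℂ) * Complex.I) • (H k).map Complex.ofReal
      + Complex.exp (((k : ℕ) : ℂ) * (θ₁ : ℂ) * Complex.I) • ((H k)ᵀ).map Complex.ofReal)
      - (Complex.exp (-((k : ℕ) : ℂ) * (θ₂ : ℂ) * Complex.I) • (H k).map Complex.ofReal
      + Complex.exp (((k : ℕ) : ℂ) * (θ₂ : ℂ) * Complex.I) • ((H k)ᵀ).map Complex.ofReal)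
      = (Complex.exp (-((k : ℕ) : ℂ) * (θ₁ : ℂ) * Complex.I)
          - Complex.exp (-((k : ℕ) : ℂ) * (θ₂ : ℂ) * Complex.I)) • (H k).map Complex.ofReal
        + (Complex.exp (((k : ℕ) : ℂ) * (θ₁ : ℂ) * Complex.I)
          - Complex.exp (((k : ℕ) : ℂ) * (θ₂ : ℂ) * Complex.I)) • ((H k)ᵀ).map Complex.ofReal := by
    rw [sub_smul, sub_smul]; abel
  rw [hterm, map_add, _root_.map_smul, _root_.map_smul]
  refine (norm_add_le _ _).trans ?_
  refine le_trans (add_le_add (ContinuousLinearMap.opNorm_smul_le _ _)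
    (ContinuousLinearMap.opNorm_smul_le _ _)) ?_
  have hc1 : ‖Complex.exp (-((k : ℕ) : ℂ) * (θ₁ : ℂ) * Complex.I)
      - Complex.exp (-((k : ℕ) : ℂ) * (θ₂ : ℂ) * Complex.I)‖ ≤ (k : ℝ) * |θ₁ - θ₂| := by
    have h1 : (-((k : ℕ) : ℂ) * (θ₁ : ℂ) * Complex.I) = ((-((k:ℕ) * θ₁) : ℝ) : ℂ) * Complex.I := by
      push_cast; ring
    have h2 : (-((k : ℕ) : ℂ) * (θ₂ : ℂ) * Complex.I) = ((-((k:ℕ) * θ₂) : ℝ) : ℂ) * Complex.I := by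
      push_cast; ring
    rw [h1, h2]
    refine (exp_I_sub_exp_I _ _).trans_eq ?_
    rw [show -((k:ℕ) * θ₁) - -((k:ℕ) * θ₂) = (k:ℝ) * (θ₂ - θ₁) by ring, abs_mul,
      Nat.abs_cast, abs_sub_comm]
  have hc2 : ‖Complex.exp (((k : ℕ) : ℂ) * (θ₁ : ℂ) * Complex.I)
      - Complex.exp (((k : ℕ) : ℂ) * (θ₂ : ℂ) * Complex.I)‖ ≤ (k : ℝ) * |θ₁ - θ₂| := by
    have h1 : (((k : ℕ) : ℂ) * (θ₁ : ℂ) * Complex.I) = ((((k:ℕ) * θ₁) : ℝ) : ℂ) * Complex.I := by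
      push_cast; ring
    have h2 : (((k : ℕ) : ℂ) * (θ₂ : ℂ) * Complex.I) = ((((k:ℕ) * θ₂) : ℝ) : ℂ) * Complex.I := by
      push_cast; ring
    rw [h1, h2]
    refine (exp_I_sub_exp_I _ _).trans_eq ?_
    rw [show ((k:ℕ) * θ₁) - ((k:ℕ) * θ₂) = (k:ℝ) * (θ₁ - θ₂) by ring, abs_mul, Nat.abs_cast]
  have hA : ‖Φ ((H k).map Complex.ofReal)‖ ≤ ρ₀ * ρ ^ (k:ℕ) := hH k
  have hB : ‖Φ (((H k)ᵀ).map Complex.ofReal)‖ ≤ ρ₀ * ρ ^ (k:ℕ) :=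
    (specNorm_transpose (H k)).le.trans (hH k)
  have h0 : (0:ℝ) ≤ (k:ℝ) * |θ₁ - θ₂| := by positivity
  nlinarith [norm_nonneg (Φ ((H k).map Complex.ofReal)),
    norm_nonneg (Φ (((H k)ᵀ).map Complex.ofReal)), abs_nonneg (θ₁ - θ₂),
    Nat.cast_nonneg (α := ℝ) (k:ℕ)]

theorem stmt4 {n m : ℕ} (H : Fin m → Matrix (Fin n) (Fin n) ℝ)
    (ρ₀ ρ : ℝ) (hρ₀ : 1 ≤ ρ₀) (hρ0 : 0 < ρ) (hρ1 : ρ < 1)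
    (hH : ∀ k : Fin m, specNorm ((H k).map Complex.ofReal) ≤ ρ₀ * ρ ^ (k : ℕ))
    (M : ℕ) (hM : 2 ≤ M) (ε : ℝ)
    (hε : ((m : ℝ) - 1) / M * Real.pi * ρ₀ * (1 - ρ ^ m) / (1 - ρ) ≤ ε)
    (hSamples : ∀ q : ℕ, q ≤ M →
      (Ffun H (q * Real.pi / M) - (ε : ℂ) • (1 : Matrix (Fin n) (Fin n) ℂ)).PosSemidef) :
    ∀ θ ∈ Set.Icc 0 Real.pi, (Ffun H θ).PosSemidef := by
  intro θ hθ
  obtain ⟨hθ0, hθπ⟩ := hθ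
  rcases Nat.eq_zero_or_pos m with hm | hm1
  · subst hm
    have : Ffun H θ = 0 := by
      unfold Ffun
      simp
    rw [this]
    exact Matrix.PosSemidef.zero
  -- setup
  have hπ := Real.pi_pos
  have hM0 : (0:ℝ) < M := by
    have : (2:ℝ) ≤ M := by exact_mod_cast hM
    linarith
  set x := θ * M / Real.pi with hx
  have hx0 : 0 ≤ x := by positivity
  have hxM : x ≤ M := by
    rw [hx, div_le_iff₀ hπ]
    nlinarith
  set q : ℤ := round x with hq
  have hq0 : 0 ≤ q := by
    rw [hq, round_eq]
    exact Int.le_floor.2 (by push_cast; linarith)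
  have hqM : q ≤ (M:ℤ) := by
    rw [hq, round_eq]
    have : (⌊x + 1/2⌋ : ℤ) < (M:ℤ) + 1 := Int.floor_lt.2 (by push_cast; linarith)
    omega
  set q' : ℕ := q.toNat with hq'
  have hq'c : ((q':ℕ):ℝ) = (q:ℝ) := by
    rw [hq']
    exact_mod_cast congrArg Int.cast (Int.toNat_of_nonneg hq0)
  have hq'M : q' ≤ M := by omega
  have hround : |x - (q:ℝ)| ≤ 1/2 := abs_sub_round x
  set θq := (q' : ℝ) * Real.pi / M with hθq
  have hxθ : x * Real.pi / M = θ := by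
    rw [hx]
    field_simp
  have hΔ : |θq - θ| ≤ Real.pi / (2*M) := by
    have h1 : θq - θ = ((q:ℝ) - x) * (Real.pi / M) := by
      rw [hθq, ← hxθ, hq'c]
      field_simp
    rw [h1, abs_mul, abs_sub_comm, abs_of_pos (by positivity : (0:ℝ) < Real.pi / M)]
    calc |x - (q:ℝ)| * (Real.pi / M) ≤ (1/2) * (Real.pi / M) := by
          gcongr
      _ = Real.pi / (2*M) := by ring
  -- norm bound on the difference
  have hm1R : (1:ℝ) ≤ (m:ℝ) := by exact_mod_cast hm1
  have hρ0' : (0:ℝ) < ρ₀ := lt_of_lt_of_le one_pos hρ₀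
  have hS0 : 0 ≤ (1 - ρ^m)/(1-ρ) := by
    have h1 : ρ^m ≤ 1 := pow_le_one₀ hρ0.le hρ1.le
    exact div_nonneg (by linarith) (by linarith)
  have hsum : ∑ k : Fin m, ρ ^ (k:ℕ) = (1 - ρ^m)/(1-ρ) := by
    rw [Fin.sum_univ_eq_sum_range (fun i => ρ^i), geom_sum_eq (by linarith : ρ ≠ 1)]
    have h1 : ρ - 1 ≠ 0 := by linarith
    have h2 : (1:ℝ) - ρ ≠ 0 := by linarith
    field_simp
    ring
  set c := 2 * ((m:ℝ)-1) * |θq - θ| * ρ₀ with hc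
  have hbound : specNorm (Ffun H θq - Ffun H θ) ≤ ε := by
    calc specNorm (Ffun H θq - Ffun H θ)
        ≤ ∑ k : Fin m, 2 * (k : ℝ) * |θq - θ| * (ρ₀ * ρ ^ (k : ℕ)) := Ffun_lip H hH θq θ
      _ ≤ ∑ k : Fin m, c * ρ ^ (k:ℕ) := by
          refine Finset.sum_le_sum fun k _ => ?_
          have hk : (k:ℝ) ≤ (m:ℝ) - 1 := by
            have := k.isLt
            have : ((k:ℕ):ℝ) + 1 ≤ (m:ℝ) := by exact_mod_cast Nat.succ_le_of_lt this
            linarith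
          rw [hc]
          have hp : (0:ℝ) ≤ ρ ^ (k:ℕ) := by positivity
          nlinarith [mul_nonneg (mul_nonneg (mul_nonneg
            (by linarith : (0:ℝ) ≤ 2*((m:ℝ)-1-(k:ℝ))) (abs_nonneg (θq - θ))) hρ0'.le) hp]
      _ = c * ((1 - ρ^m)/(1-ρ)) := by rw [← Finset.mul_sum, hsum]
      _ ≤ (((m:ℝ)-1) / M * Real.pi * ρ₀) * ((1 - ρ^m)/(1-ρ)) := by
          refine mul_le_mul_of_nonneg_right ?_ hS0
          rw [hc]
          have h2 : ((m:ℝ)-1) / M * Real.pi * ρ₀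
              = 2 * ((m:ℝ)-1) * (Real.pi / (2*M)) * ρ₀ := by
            field_simp
          rw [h2]
          nlinarith [mul_nonneg (mul_nonneg (by linarith : (0:ℝ) ≤ 2*((m:ℝ)-1))
            (sub_nonneg.2 hΔ)) hρ0'.le]
      _ ≤ ε := by
          refine le_trans (le_of_eq ?_) hε
          ring
  -- assemble
  have hD : (Ffun H θq - Ffun H θ).IsHermitian := (Ffun_herm H θq).sub (Ffun_herm H θ)
  have hpsd2 := psd_of_norm_le hD hbound
  have hpsd1 := hSamples q' hq'M
  have hsplit : Ffun H θ = (Ffun H θq - (ε:ℂ) • (1 : Matrix (Fin n) (Fin n) ℂ))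
      + ((ε:ℂ) • (1 : Matrix (Fin n) (Fin n) ℂ) - (Ffun H θq - Ffun H θ)) := by
    abel
  rw [hsplit]
  exact hpsd1.add hpsd2
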